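/- Let A and B be densely defined closeable operators in a complex Hilbert space H such that D(AB) and D(B*A*) are both dense. If the product adjoint equality (B*A*)* = A**B** holds, then the product closure(A)closure(B) is a closed operator and (closure(A)closure(B))* = closure(B*A*). If moreover A and B are closed, then AB is closed. -/

import Mathlib

open LinearPMap

variable {H : Type*} [NormedAddCommGroup H] [InnerProductSpace ℂ H] [CompleteSpace H]

/-- The graph of the unbounded-operator product `A ∘ B`,
i.e. the linear relation `{(x, z) : ∃ y, (x, y) ∈ graph B ∧ (y, z) ∈ graph A}`. -/
noncomputable def LinearPMap.productGraph (A B : H →ₗ.[ℂ] H) : Submodule ℂ (H × H) where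
  carrier := {p : H × H | ∃ y : H, (p.1, y) ∈ B.graph ∧ (y, p.2) ∈ A.graph}
  add_mem' := by
    rintro p q ⟨y, hy1, hy2⟩ ⟨z, hz1, hz2⟩
    exact ⟨y + z, add_mem hy1 hz1, add_mem hy2 hz2⟩
  zero_mem' := ⟨0, zero_mem _, zero_mem _⟩
  smul_mem' := by
    rintro c p ⟨y, hy1, hy2⟩
    exact ⟨c • y, Submodule.smul_mem _ c hy1, Submodule.smul_mem _ c hy2⟩

/-- The product (composition) `A ∘ B` of two unbounded operators: its domain is
`{x ∈ D(B) : B x ∈ D(A)}` and it sends `x` to `A (B x)`. -/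
noncomputable def LinearPMap.product (A B : H →ₗ.[ℂ] H) : H →ₗ.[ℂ] H :=
  (A.productGraph B).toLinearPMap

/-- An unbounded operator is normal if it is densely defined, closed and `T*T = TT*`
(equality of unbounded operators, including equality of domains). -/
def LinearPMap.IsNormalOp (T : H →ₗ.[ℂ] H) : Prop :=
  Dense (T.domain : Set H) ∧ T.IsClosed ∧ (T†).product T = T.product (T†)

/-- `B` is relatively bounded with respect to `T` (`B` is `T`-bounded): `D(T) ⊆ D(B)` and
`‖B x‖ ≤ a ‖x‖ + b ‖T x‖` on `D(T)` for some constants `a, b ≥ 0`. -/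
def LinearPMap.IsRelativelyBounded (B T : H →ₗ.[ℂ] H) : Prop :=
  T.domain ≤ B.domain ∧ ∃ a b : ℝ, 0 ≤ a ∧ 0 ≤ b ∧
    ∀ (x : H) (hxT : x ∈ T.domain) (hxB : x ∈ B.domain),
      ‖B ⟨x, hxB⟩‖ ≤ a * ‖x‖ + b * ‖T ⟨x, hxT⟩‖

local notation "⟪" x ", " y "⟫" => @inner ℂ _ _ x y

noncomputable def Om : WithLp 2 (H × H) →ₗ[ℂ] WithLp 2 (H × H) :=
  (WithLp.linearEquiv 2 ℂ (H × H)).symm.toLinearMap ∘ₗ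
    ((-(LinearMap.snd ℂ H H)).prod (LinearMap.fst ℂ H H)) ∘ₗ
    (WithLp.linearEquiv 2 ℂ (H × H)).toLinearMap

@[simp] lemma Om_fst (p : WithLp 2 (H × H)) : (Om p).fst = -p.snd := rfl
@[simp] lemma Om_snd (p : WithLp 2 (H × H)) : (Om p).snd = p.fst := rfl

lemma Om_Om (p : WithLp 2 (H × H)) : Om (Om p) = -p := rfl

lemma inner_Om (p q : WithLp 2 (H × H)) : ⟪Om p, Om q⟫ = ⟪p, q⟫ := by
  simp [WithLp.prod_inner_apply]; ring

noncomputable def grL (T : H →ₗ.[ℂ] H) : Submodule ℂ (WithLp 2 (H × H)) :=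
  T.graph.comap (WithLp.linearEquiv 2 ℂ (H × H)).toLinearMap

lemma mem_grL {T : H →ₗ.[ℂ] H} {p : WithLp 2 (H × H)} :
    p ∈ grL T ↔ (p.fst, p.snd) ∈ T.graph := Iff.rfl
set_option linter.unusedSectionVars false

lemma orthogonal_map_Om (K : Submodule ℂ (WithLp 2 (H × H))) :
    (K.map Om)ᗮ = Kᗮ.map (Om (H := H)) := by
  ext z
  simp only [Submodule.mem_orthogonal, Submodule.mem_map]
  constructor
  · intro h
    refine ⟨-Om z, fun u hu => ?_, by rw [_root_.map_neg, Om_Om, neg_neg]⟩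
    have h0 := h _ ⟨u, hu, rfl⟩
    rw [← inner_Om, Om_Om] at h0
    simpa [inner_neg_left] using h0
  · rintro ⟨w, hw, rfl⟩ u ⟨v, hv, rfl⟩
    rw [inner_Om]
    exact hw v hv

lemma map_Om_map_Om (K : Submodule ℂ (WithLp 2 (H × H))) : (K.map Om).map Om = K := by
  ext z
  simp only [Submodule.mem_map]
  constructor
  · rintro ⟨w, ⟨v, hv, rfl⟩, rfl⟩
    rw [Om_Om]; exact K.neg_mem hv
  · intro hz
    exact ⟨Om (-z), ⟨-z, K.neg_mem hz, rfl⟩, by rw [Om_Om, neg_neg]⟩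

lemma mem_orth_char (T : H →ₗ.[ℂ] H) (p : WithLp 2 (H × H)) :
    p ∈ ((grL T).map Om)ᗮ ↔ ∀ x : T.domain, ⟪(T x : H), p.fst⟫ = ⟪(x : H), p.snd⟫ := by
  rw [Submodule.mem_orthogonal]
  constructor
  · intro h x
    have hx : ((WithLp.linearEquiv 2 ℂ (H × H)).symm ((x : H), T x)) ∈ grL T := by
      rw [mem_grL]
      simpa using T.mem_graph x
    have h0 := h _ (Submodule.mem_map_of_mem hx)
    simp only [WithLp.prod_inner_apply, Om_fst, Om_snd] at h0
    simp only [WithLp.coe_symm_linearEquiv, WithLp.toLp_fst, WithLp.toLp_snd, WithLp.ofLp_fst,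
      WithLp.ofLp_snd, Om_fst, Om_snd, inner_neg_left] at h0
    rw [neg_add_eq_zero] at h0
    exact h0
  · rintro h u ⟨r, hr, rfl⟩
    rw [SetLike.mem_coe, mem_grL, LinearPMap.mem_graph_iff] at hr
    obtain ⟨y, hy1, hy2⟩ := hr
    simp only [WithLp.prod_inner_apply, WithLp.ofLp_fst, WithLp.ofLp_snd, Om_fst, Om_snd,
      inner_neg_left]
    simp only [] at hy1 hy2
    rw [← hy2, ← hy1, neg_add_eq_zero]
    exact h y

lemma mem_adjoint_graph_iff {T : H →ₗ.[ℂ] H} (hT : Dense (T.domain : Set H)) (a b : H) :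
    (a, b) ∈ (T†).graph ↔ ∀ x : T.domain, ⟪(T x : H), a⟫ = ⟪(x : H), b⟫ := by
  rw [LinearPMap.mem_graph_iff]
  constructor
  · rintro ⟨y, hy1, hy2⟩ x
    have := (T.adjoint_isFormalAdjoint hT) y x
    simp only at hy1 hy2
    rw [hy1, hy2] at this
    calc ⟪(T x : H), a⟫ = (starRingEnd ℂ) ⟪a, (T x : H)⟫ := by rw [inner_conj_symm]
      _ = (starRingEnd ℂ) ⟪b, (x : H)⟫ := by rw [this]
      _ = ⟪(x : H), b⟫ := by rw [inner_conj_symm]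
  · intro h
    have ha : a ∈ (T†).domain := by
      apply LinearPMap.mem_adjoint_domain_of_exists
      exact ⟨b, fun x => by rw [← inner_conj_symm, ← h x, inner_conj_symm]⟩
    refine ⟨⟨a, ha⟩, rfl, ?_⟩
    exact LinearPMap.adjoint_apply_eq hT ⟨a, ha⟩
      (fun x => by rw [← inner_conj_symm, ← h x, inner_conj_symm])

lemma grL_adjoint {T : H →ₗ.[ℂ] H} (hT : Dense (T.domain : Set H)) :
    grL (T†) = ((grL T).map Om)ᗮ := by
  ext p
  rw [mem_grL, mem_orth_char, mem_adjoint_graph_iff hT]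

noncomputable def heL : WithLp 2 (H × H) ≃ₜ (H × H) :=
  { WithLp.equiv 2 (H × H) with
    continuous_toFun := WithLp.prod_continuous_ofLp 2 H H
    continuous_invFun := WithLp.prod_continuous_toLp 2 H H }

lemma coe_grL (T : H →ₗ.[ℂ] H) : (grL T : Set (WithLp 2 (H × H))) = heL ⁻¹' (T.graph : Set (H × H)) := rfl

lemma coe_graph_eq (T : H →ₗ.[ℂ] H) :
    (T.graph : Set (H × H)) = (heL (H := H)).symm ⁻¹' (grL T : Set (WithLp 2 (H × H))) := by
  rw [coe_grL, ← Set.preimage_comp]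
  simp [Function.comp_def]

lemma adjoint_isClosed {T : H →ₗ.[ℂ] H} (hT : Dense (T.domain : Set H)) : (T†).IsClosed := by
  have h : IsClosed ((grL (T†)) : Set (WithLp 2 (H × H))) := by
    rw [grL_adjoint hT]
    exact Submodule.isClosed_orthogonal _
  rw [LinearPMap.IsClosed, coe_graph_eq]
  exact h.preimage (heL (H := H)).symm.continuous

lemma grL_closure {T : H →ₗ.[ℂ] H} (hTc : T.IsClosable) :
    grL T.closure = (grL T).topologicalClosure := by
  apply SetLike.coe_injective
  rw [Submodule.topologicalClosure_coe, coe_grL, coe_grL]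
  rw [← hTc.graph_closure_eq_closure_graph]
  rw [Submodule.topologicalClosure_coe]
  exact ((heL (H := H)).preimage_closure _)

lemma eq_of_grL_eq {S T : H →ₗ.[ℂ] H} (h : grL S = grL T) : S = T := by
  apply LinearPMap.eq_of_eq_graph
  apply SetLike.coe_injective
  rw [coe_graph_eq, coe_graph_eq, h]

lemma orth_of_adj_eq_grL_closure {T : H →ₗ.[ℂ] H} (hT : Dense (T.domain : Set H))
    (hTc : T.IsClosable) : ((grL (T†)).map Om)ᗮ = grL T.closure := by
  rw [grL_adjoint hT, orthogonal_map_Om (grL T), map_Om_map_Om,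
    Submodule.orthogonal_orthogonal_eq_closure, grL_closure hTc]

theorem adjoint_dense_and_adjoint_adjoint {T : H →ₗ.[ℂ] H} (hT : Dense (T.domain : Set H))
    (hTc : T.IsClosable) : Dense ((T†).domain : Set H) ∧ (T†)† = T.closure := by
  have hdense : Dense ((T†).domain : Set H) := by
    rw [Submodule.dense_iff_topologicalClosure_eq_top,
      ← Submodule.orthogonal_orthogonal_eq_closure]
    have hbot : ((T†).domain)ᗮ = ⊥ := by
      rw [Submodule.eq_bot_iff]
      intro z hz
      have hp : ((WithLp.linearEquiv 2 ℂ (H × H)).symm ((0 : H), z)) ∈ grL T.closure := by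
        rw [← orth_of_adj_eq_grL_closure hT hTc, mem_orth_char]
        intro y
        simp only [WithLp.coe_symm_linearEquiv, WithLp.toLp_fst, WithLp.toLp_snd,
          inner_zero_right]
        exact ((Submodule.mem_orthogonal _ z).mp hz _ y.2).symm
      rw [mem_grL] at hp
      simp only [WithLp.coe_symm_linearEquiv, WithLp.toLp_fst, WithLp.toLp_snd] at hp
      exact T.closure.graph_fst_eq_zero_snd hp rfl
    rw [hbot, Submodule.bot_orthogonal_eq_top]
  refine ⟨hdense, ?_⟩
  apply eq_of_grL_eq
  rw [grL_adjoint hdense, orth_of_adj_eq_grL_closure hT hTc]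

lemma le_adjoint_adjoint {T : H →ₗ.[ℂ] H} (hT : Dense (T.domain : Set H))
    (hT' : Dense ((T†).domain : Set H)) : T ≤ (T†)† := by
  apply LinearPMap.le_of_le_graph
  intro p hp
  rw [LinearPMap.mem_graph_iff] at hp
  obtain ⟨x, hx1, hx2⟩ := hp
  have : ((WithLp.linearEquiv 2 ℂ (H × H)).symm p) ∈ grL ((T†)†) := by
    rw [grL_adjoint hT', mem_orth_char]
    intro y
    simp only [WithLp.coe_symm_linearEquiv, WithLp.toLp_fst, WithLp.toLp_snd]
    rw [← hx1, ← hx2]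
    exact (T.adjoint_isFormalAdjoint hT) y x
  rw [mem_grL] at this
  simpa using this


lemma productGraph_valid (A B : H →ₗ.[ℂ] H) :
    ∀ (x : H × H) (_hx : x ∈ A.productGraph B) (_hx' : x.fst = 0), x.snd = 0 := by
  rintro ⟨x, z⟩ ⟨y, hy1, hy2⟩ hx0
  simp only at hx0
  subst hx0
  have hy0 : y = 0 := B.graph_fst_eq_zero_snd hy1 rfl
  subst hy0
  exact A.graph_fst_eq_zero_snd hy2 rfl

lemma product_graph_eq (A B : H →ₗ.[ℂ] H) : (A.product B).graph = A.productGraph B :=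
  Submodule.toLinearPMap_graph_eq _ (productGraph_valid A B)

lemma product_le {A A' B B' : H →ₗ.[ℂ] H} (hA : A ≤ A') (hB : B ≤ B') :
    A.product B ≤ A'.product B' := by
  apply LinearPMap.le_of_le_graph
  rw [product_graph_eq, product_graph_eq]
  rintro p ⟨y, h1, h2⟩
  exact ⟨y, LinearPMap.le_graph_of_le hB h1, LinearPMap.le_graph_of_le hA h2⟩

lemma closure_eq_of_isClosed {f : H →ₗ.[ℂ] H} (hf : f.IsClosed) : f.closure = f := by
  apply LinearPMap.eq_of_eq_graph
  rw [← hf.isClosable.graph_closure_eq_closure_graph]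
  apply SetLike.coe_injective
  rw [Submodule.topologicalClosure_coe]
  exact hf.closure_eq


/-- If `(B*A*)* = A**B**`, then `closure(A)closure(B)` is closed and
`(closure(A)closure(B))* = closure(B*A*)`; if moreover `A` and `B` are closed then `AB`
is closed. -/
theorem statement1 (A B : H →ₗ.[ℂ] H)
    (hA : Dense (A.domain : Set H)) (hB : Dense (B.domain : Set H))
    (hAc : A.IsClosable) (hBc : B.IsClosable)
    (hAB : Dense ((A.product B).domain : Set H))
    (hBA : Dense (((B†).product (A†)).domain : Set H))
    (heq : ((B†).product (A†))† = (A††).product (B††)) :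
    (A.closure.product B.closure).IsClosed ∧
      (A.closure.product B.closure)† = ((B†).product (A†)).closure ∧
      (A.IsClosed → B.IsClosed → (A.product B).IsClosed) := by
  obtain ⟨hAd, hAeq⟩ := adjoint_dense_and_adjoint_adjoint hA hAc
  obtain ⟨hBd, hBeq⟩ := adjoint_dense_and_adjoint_adjoint hB hBc
  set S := (B†).product (A†) with hS
  have key : S† = A.closure.product B.closure := by
    rw [heq, hAeq, hBeq]
  have hclosed : (A.closure.product B.closure).IsClosed := by
    rw [← key]
    exact _root_.adjoint_isClosed hBA
  refine ⟨hclosed, ?_, ?_⟩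
  · -- (closure A ∘ closure B)† = closure S
    have hdom : ((A.product B).domain : Set H) ⊆ ((S†).domain : Set H) := by
      rw [key]
      exact (product_le A.le_closure B.le_closure).1
    have hSd : Dense ((S†).domain : Set H) := hAB.mono hdom
    have hScl : S.IsClosable :=
      LinearPMap.isClosable_iff_exists_closed_extension.mpr
        ⟨(S†)†, _root_.adjoint_isClosed hSd, le_adjoint_adjoint hBA hSd⟩
    rw [← key]
    exact (adjoint_dense_and_adjoint_adjoint hBA hScl).2
  · intro hAcl hBcl
    rwa [closure_eq_of_isClosed hAcl, closure_eq_of_isClosed hBcl] at hclosed
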